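/- The minimum over all probability distributions Q on a finite alphabet X of D(Q‖P₁)+D(Q‖P₂) is attained at the normalized geometric mean Q*(x) = √(P₁(x)P₂(x)) / ∑_y √(P₁(y)P₂(y)), and its value equals −2 log ∑_x √(P₁(x)P₂(x)), i.e., the Rényi divergence of order 1/2 between P₁ and P₂. -/

import Mathlib

open scoped BigOperators

noncomputable section

variable {X : Type*}

/-- `p` is a probability mass function on the finite alphabet `X`. -/
def IsProbVec [Fintype X] (p : X → ℝ) : Prop := (∀ x, 0 ≤ p x) ∧ ∑ x, p x = 1

/-- One term of the KL divergence, with the conventions `0 · log (0/q) = 0` and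
`p · log (p/0) = +∞` for `p > 0`. -/
def klTerm (p q : ℝ) : EReal :=
  if p = 0 then 0 else if q = 0 then ⊤ else ((p * Real.log (p / q) : ℝ) : EReal)

/-- Kullback–Leibler divergence `D(P‖Q)` on a finite alphabet, valued in `EReal`. -/
def KL [Fintype X] (P Q : X → ℝ) : EReal := ∑ x, klTerm (P x) (Q x)

/-- Generalized Jensen–Shannon divergence. -/
def GJS [Fintype X] (P Q : X → ℝ) : EReal :=
  KL P (fun x => (P x + Q x) / 2) + KL Q (fun x => (P x + Q x) / 2)

variable [Fintype X]

/-- The exponent function `η(P₁,P₂)`: infimum of `D(Q₁‖P₁)+D(Q₂‖P₂)+D(Q₃‖P₂)` over triples of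
distributions with `f(Q₁,Q₂) ≤ f(Q₃,Q₂)`. -/
def eta (f : (X → ℝ) → (X → ℝ) → ℝ) (P₁ P₂ : X → ℝ) : EReal :=
  ⨅ t : {t : (X → ℝ) × (X → ℝ) × (X → ℝ) //
      IsProbVec t.1 ∧ IsProbVec t.2.1 ∧ IsProbVec t.2.2 ∧ f t.1 t.2.1 ≤ f t.2.2 t.2.1},
    KL t.1.1 P₁ + KL t.1.2.1 P₂ + KL t.1.2.2 P₂

/-- The exponent function `Ω(P₁,P₂,λ)`: infimum of `D(Q₁‖P₁)+D(Q₂‖P₂)` over pairs of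
distributions with `f(Q₁,Q₂) ≤ λ`. -/
def Omega (f : (X → ℝ) → (X → ℝ) → ℝ) (P₁ P₂ : X → ℝ) (lam : ℝ) : EReal :=
  ⨅ t : {t : (X → ℝ) × (X → ℝ) // IsProbVec t.1 ∧ IsProbVec t.2 ∧ f t.1 t.2 ≤ lam},
    KL t.1.1 P₁ + KL t.1.2 P₂

/-- The exponent function `Υ(P,λ)`: infimum of `D(Q₁‖P)+D(Q₂‖P)` over pairs of distributions
with `f(Q₁,Q₂) ≥ λ` (the infimum over the empty set being `+∞`). -/
def Upsilon (f : (X → ℝ) → (X → ℝ) → ℝ) (P : X → ℝ) (lam : ℝ) : EReal :=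
  ⨅ t : {t : (X → ℝ) × (X → ℝ) // IsProbVec t.1 ∧ IsProbVec t.2 ∧ lam ≤ f t.1 t.2},
    KL t.1.1 P + KL t.1.2 P

/-- The exponent function `γ(P₁,P₂)`: infimum of `D(Q₁‖P₁)+D(Q₂‖P₁)+D(Q₃‖P₂)` over triples of
distributions with `f(Q₁,Q₃) ≤ f(Q₁,Q₂)`. -/
def gammaExp (f : (X → ℝ) → (X → ℝ) → ℝ) (P₁ P₂ : X → ℝ) : EReal :=
  ⨅ t : {t : (X → ℝ) × (X → ℝ) × (X → ℝ) //
      IsProbVec t.1 ∧ IsProbVec t.2.1 ∧ IsProbVec t.2.2 ∧ f t.1 t.2.2 ≤ f t.1 t.2.1},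
    KL t.1.1 P₁ + KL t.1.2.1 P₁ + KL t.1.2.2 P₂

/-- `min_Q D(Q‖P₁)+D(Q‖P₂)`, i.e. `Ω(P₁,P₂,0)` for a scoring function vanishing exactly on
the diagonal. -/
def OmegaZero (P₁ P₂ : X → ℝ) : EReal :=
  ⨅ Q : {q : X → ℝ // IsProbVec q}, KL Q.1 P₁ + KL Q.1 P₂

/-! ### Auxiliary lemmas -/

lemma ereal_coe_sum {α : Type*} (s : Finset α) (f : α → ℝ) :
    ((∑ x ∈ s, f x : ℝ) : EReal) = ∑ x ∈ s, ((f x : ℝ) : EReal) := by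
  classical
  induction s using Finset.induction with
  | empty => simp
  | insert _ _ h ih => rw [Finset.sum_insert h, Finset.sum_insert h, EReal.coe_add, ih]

lemma klTerm_ne_bot (p q : ℝ) : klTerm p q ≠ ⊥ := by
  unfold klTerm
  split_ifs
  · simp
  · simp
  · exact EReal.coe_ne_bot _

lemma ereal_sum_ne_bot {α : Type*} (s : Finset α) (f : α → EReal)
    (h : ∀ x ∈ s, f x ≠ ⊥) : ∑ x ∈ s, f x ≠ ⊥ := by
  classical
  induction s using Finset.induction with
  | empty => simp
  | insert _ _ hmem ih =>
    rw [Finset.sum_insert hmem]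
    rw [Ne, EReal.add_eq_bot_iff]
    push_neg
    exact ⟨h _ (Finset.mem_insert_self _ _),
      ih fun x hx => h x (Finset.mem_insert_of_mem hx)⟩

lemma KL_ne_bot (Q P : X → ℝ) : KL Q P ≠ ⊥ :=
  ereal_sum_ne_bot _ _ fun x _ => klTerm_ne_bot _ _

lemma ereal_sum_eq_top {α : Type*} (s : Finset α) (f : α → EReal)
    (hb : ∀ x ∈ s, f x ≠ ⊥) {x₀ : α} (hx₀ : x₀ ∈ s) (ht : f x₀ = ⊤) :
    ∑ x ∈ s, f x = ⊤ := by
  classical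
  rw [← Finset.add_sum_erase s f hx₀, ht]
  exact EReal.top_add_of_ne_bot
    (ereal_sum_ne_bot _ _ fun x hx => hb x (Finset.mem_of_mem_erase hx))

lemma KL_eq_coe (Q P : X → ℝ) (h : ∀ x, Q x ≠ 0 → P x ≠ 0) :
    KL Q P = ((∑ x, if Q x = 0 then 0 else Q x * Real.log (Q x / P x) : ℝ) : EReal) := by
  rw [KL, ereal_coe_sum]
  refine Finset.sum_congr rfl fun x _ => ?_
  by_cases hq : Q x = 0
  · simp [klTerm, hq]
  · simp [klTerm, hq, h x hq]

/-- `min_Q D(Q‖P₁)+D(Q‖P₂)` is attained at the normalized geometric mean and equals the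
Rényi divergence of order `1/2`, `−2 log ∑_x √(P₁(x)P₂(x))`. -/
theorem OmegaZero_eq_renyi_half [Nonempty X] (P₁ P₂ : X → ℝ)
    (hP₁ : IsProbVec P₁) (hP₂ : IsProbVec P₂)
    (hpos : 0 < ∑ x, Real.sqrt (P₁ x * P₂ x)) :
    IsProbVec (fun x => Real.sqrt (P₁ x * P₂ x) / ∑ y, Real.sqrt (P₁ y * P₂ y)) ∧
    KL (fun x => Real.sqrt (P₁ x * P₂ x) / ∑ y, Real.sqrt (P₁ y * P₂ y)) P₁ +
      KL (fun x => Real.sqrt (P₁ x * P₂ x) / ∑ y, Real.sqrt (P₁ y * P₂ y)) P₂ =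
        ((-2 * Real.log (∑ x, Real.sqrt (P₁ x * P₂ x)) : ℝ) : EReal) ∧
    OmegaZero P₁ P₂ = ((-2 * Real.log (∑ x, Real.sqrt (P₁ x * P₂ x)) : ℝ) : EReal) := by
  set S : ℝ := ∑ x, Real.sqrt (P₁ x * P₂ x) with hSdef
  set Q : X → ℝ := fun x => Real.sqrt (P₁ x * P₂ x) / S with hQdef
  have hS : 0 < S := hpos
  have hQnn : ∀ x, 0 ≤ Q x := fun x => div_nonneg (Real.sqrt_nonneg _) hS.le
  have hQsum : ∑ x, Q x = 1 := by
    rw [hQdef, ← Finset.sum_div, ← hSdef, div_self hS.ne']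
  have hQne : ∀ x, Q x ≠ 0 → 0 < P₁ x ∧ 0 < P₂ x := by
    intro x hx
    have hs : Real.sqrt (P₁ x * P₂ x) ≠ 0 := by
      intro h0; apply hx; rw [hQdef]; simp [h0]
    have hm : P₁ x * P₂ x ≠ 0 := fun h0 => hs (by rw [h0, Real.sqrt_zero])
    exact ⟨lt_of_le_of_ne (hP₁.1 x) (Ne.symm (left_ne_zero_of_mul hm)),
      lt_of_le_of_ne (hP₂.1 x) (Ne.symm (right_ne_zero_of_mul hm))⟩
  have hQprob : IsProbVec Q := ⟨hQnn, hQsum⟩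
  -- key log identity
  have hlogQ : ∀ x, Q x ≠ 0 →
      Real.log (Q x) = (Real.log (P₁ x) + Real.log (P₂ x)) / 2 - Real.log S := by
    intro x hx
    obtain ⟨h1, h2⟩ := hQne x hx
    rw [hQdef]
    simp only
    rw [Real.log_div (by positivity) hS.ne', Real.log_sqrt (by positivity),
      Real.log_mul h1.ne' h2.ne']
  -- Part 2 computation
  have part2 : KL Q P₁ + KL Q P₂ = ((-2 * Real.log S : ℝ) : EReal) := by
    rw [KL_eq_coe Q P₁ (fun x hx => (hQne x hx).1.ne'),
      KL_eq_coe Q P₂ (fun x hx => (hQne x hx).2.ne'), ← EReal.coe_add,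
      EReal.coe_eq_coe_iff, ← Finset.sum_add_distrib]
    have : ∀ x ∈ Finset.univ,
        ((if Q x = 0 then 0 else Q x * Real.log (Q x / P₁ x)) +
         (if Q x = 0 then 0 else Q x * Real.log (Q x / P₂ x)))
          = -2 * Real.log S * Q x := by
      intro x _
      by_cases hx : Q x = 0
      · simp [hx]
      · obtain ⟨h1, h2⟩ := hQne x hx
        have hQx : 0 < Q x := lt_of_le_of_ne (hQnn x) (Ne.symm hx)
        rw [if_neg hx, if_neg hx, Real.log_div hx h1.ne', Real.log_div hx h2.ne',
          hlogQ x hx]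
        ring
    rw [Finset.sum_congr rfl this, ← Finset.mul_sum, hQsum, mul_one]
  refine ⟨hQprob, part2, ?_⟩
  -- Part 3
  refine le_antisymm ?_ ?_
  · exact (iInf_le _ ⟨Q, hQprob⟩).trans_eq part2
  · refine le_iInf fun ⟨R, hR⟩ => ?_
    simp only
    by_cases hcase : ∀ x, R x ≠ 0 → P₁ x ≠ 0 ∧ P₂ x ≠ 0
    · rw [KL_eq_coe R P₁ (fun x hx => (hcase x hx).1),
        KL_eq_coe R P₂ (fun x hx => (hcase x hx).2), ← EReal.coe_add,
        EReal.coe_le_coe_iff, ← Finset.sum_add_distrib]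
      have key : ∀ x ∈ Finset.univ,
          2 * (R x - Q x) + (-2 * Real.log S) * R x ≤
          ((if R x = 0 then 0 else R x * Real.log (R x / P₁ x)) +
           (if R x = 0 then 0 else R x * Real.log (R x / P₂ x))) := by
        intro x _
        by_cases hx : R x = 0
        · simp only [hx, if_pos]
          have := hQnn x
          nlinarith
        · have hRx : 0 < R x := lt_of_le_of_ne (hR.1 x) (Ne.symm hx)
          have h1 : 0 < P₁ x :=
            lt_of_le_of_ne (hP₁.1 x) (Ne.symm (hcase x hx).1)
          have h2 : 0 < P₂ x :=
            lt_of_le_of_ne (hP₂.1 x) (Ne.symm (hcase x hx).2)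
          have hQx : 0 < Q x := by
            rw [hQdef]
            have : 0 < P₁ x * P₂ x := mul_pos h1 h2
            positivity
          -- R log(R/Q) ≥ R - Q
          have hgibbs : R x - Q x ≤ R x * Real.log (R x / Q x) := by
            have hlog := Real.log_le_sub_one_of_pos (div_pos hQx hRx)
            have : Real.log (Q x / R x) = - Real.log (R x / Q x) := by
              rw [← Real.log_inv, inv_div]
            rw [this] at hlog
            have := mul_le_mul_of_nonneg_left hlog hRx.le
            have hne : R x ≠ 0 := hx
            field_simp at this ⊢
            nlinarith
          rw [if_neg hx, if_neg hx, Real.log_div hx h1.ne', Real.log_div hx h2.ne']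
          have hlogR : Real.log (R x / Q x) = Real.log (R x) - Real.log (Q x) :=
            Real.log_div hx hQx.ne'
          have := hlogQ x hQx.ne'
          nlinarith [hgibbs, hlogR]
      calc (-2 * Real.log S : ℝ)
          = ∑ x, (2 * (R x - Q x) + (-2 * Real.log S) * R x) := by
            rw [Finset.sum_add_distrib, ← Finset.mul_sum, ← Finset.mul_sum,
              Finset.sum_sub_distrib, hR.2, hQsum]
            ring
        _ ≤ _ := Finset.sum_le_sum key
    · push_neg at hcase
      obtain ⟨x₀, hx₀, hP0⟩ := hcase
      have htop : KL R P₁ + KL R P₂ = ⊤ := by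
        by_cases h : P₁ x₀ = 0
        · have : KL R P₁ = ⊤ :=
            ereal_sum_eq_top _ _ (fun x _ => klTerm_ne_bot _ _)
              (Finset.mem_univ x₀) (by simp [klTerm, hx₀, h])
          rw [this, EReal.top_add_of_ne_bot (KL_ne_bot _ _)]
        · have h2 : P₂ x₀ = 0 := hP0 h
          have : KL R P₂ = ⊤ :=
            ereal_sum_eq_top _ _ (fun x _ => klTerm_ne_bot _ _)
              (Finset.mem_univ x₀) (by simp [klTerm, hx₀, h2])
          rw [this, add_comm]
          exact EReal.top_add_of_ne_bot (KL_ne_bot _ _)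
      rw [htop]
      exact le_top
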